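/- Let Ω ⊆ ℂ open, T ∈ L(H), and P : Ω → L(H) with P(λ) = (λI - T)L(λ) where L is a left resolvent of T on Ω (i.e., L(λ)(λI - T) = I and the resolvent identity holds). Then P(λ)P(μ) = P(λ) for all λ, μ ∈ Ω. -/
import Mathlib

theorem P_lambda_P_mu_eq_P_lambda
    {H : Type*} [NormedAddCommGroup H] [InnerProductSpace ℂ H] [CompleteSpace H]
    (T : H →L[ℂ] H) (Ω : Set ℂ) (hΩ : IsOpen Ω)
    (L : ℂ → H →L[ℂ] H)
    (hinv : ∀ z ∈ Ω, L z * (z • (1 : H →L[ℂ] H) - T) = 1)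
    (hres : ∀ z ∈ Ω, ∀ w ∈ Ω, L z - L w = (w - z) • (L z * L w))
    (P : ℂ → H →L[ℂ] H)
    (hP : ∀ z ∈ Ω, P z = (z • (1 : H →L[ℂ] H) - T) * L z) :
    ∀ z ∈ Ω, ∀ w ∈ Ω, P z * P w = P z := by
  intro z hz w hw
  rw [hP z hz, hP w hw]
  have h1 : L z * (w • (1 : H →L[ℂ] H) - T) = (w - z) • L z + 1 := by
    have : (w • (1 : H →L[ℂ] H) - T) = (w - z) • (1 : H →L[ℂ] H) + (z • 1 - T) := by
      simp [sub_smul]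
    rw [this, mul_add, hinv z hz, mul_smul_comm, mul_one]
  have key : L z * ((w • (1 : H →L[ℂ] H) - T) * L w) = L z := by
    rw [← mul_assoc, h1, add_mul, one_mul, smul_mul_assoc, ← hres z hz w hw]
    abel
  rw [mul_assoc, key]
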